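/- States on fuzzy predicates correspond to finitely additive measures: for a set X, the map Φ sending a state h : ([0,1]^X) → [0,1] (preserving 1, partial sums, and [0,1]-scalar multiplication) to the set function U ↦ h(𝟙_U) on 𝒫(X) is a bijection onto the finitely additive [0,1]-valued measures m on 𝒫(X) with m(X) = 1. -/

import Mathlib

structure IsState {α : Type*} (h : (α → ℝ) → ℝ) : Prop where
  map_one : h (fun _ => 1) = 1
  mem : ∀ p : α → ℝ, (∀ x, p x ∈ Set.Icc (0:ℝ) 1) → h p ∈ Set.Icc (0:ℝ) 1
  add : ∀ p q : α → ℝ, (∀ x, p x ∈ Set.Icc (0:ℝ) 1) → (∀ x, q x ∈ Set.Icc (0:ℝ) 1) →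
    (∀ x, p x + q x ≤ 1) → h (fun x => p x + q x) = h p + h q
  smul : ∀ (r : ℝ) (p : α → ℝ), r ∈ Set.Icc (0:ℝ) 1 → (∀ x, p x ∈ Set.Icc (0:ℝ) 1) →
    h (fun x => r * p x) = r * h p

def IsFinAddMeasure {X : Type*} (m : Set X → ℝ) : Prop :=
  m Set.univ = 1 ∧ (∀ U : Set X, m U ∈ Set.Icc (0:ℝ) 1) ∧
  ∀ U V : Set X, Disjoint U V → m (U ∪ V) = m U + m V

section PreState
variable {α : Type*} (h : (α → ℝ) → ℝ)

/-- the data of a state without the smul axiom -/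
structure IsPreState : Prop where
  map_one : h (fun _ => 1) = 1
  mem : ∀ p : α → ℝ, (∀ x, p x ∈ Set.Icc (0:ℝ) 1) → h p ∈ Set.Icc (0:ℝ) 1
  add : ∀ p q : α → ℝ, (∀ x, p x ∈ Set.Icc (0:ℝ) 1) → (∀ x, q x ∈ Set.Icc (0:ℝ) 1) →
    (∀ x, p x + q x ≤ 1) → h (fun x => p x + q x) = h p + h q

variable {h}

theorem IsPreState.mono (hs : IsPreState h) {p q : α → ℝ} (hp : ∀ x, p x ∈ Set.Icc (0:ℝ) 1)
    (hq : ∀ x, q x ∈ Set.Icc (0:ℝ) 1) (hpq : ∀ x, p x ≤ q x) : h p ≤ h q := by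
  have hd : ∀ x, q x - p x ∈ Set.Icc (0:ℝ) 1 := fun x => by
    constructor <;> [linarith [hpq x]; linarith [(hp x).1, (hq x).2]]
  have := hs.add p (fun x => q x - p x) hp hd (fun x => by simp [(hq x).2])
  simp only [add_sub_cancel] at this
  have h2 : h (fun x => q x) = h q := rfl
  nlinarith [(hs.mem (fun x => q x - p x) hd).1, this, h2]

theorem IsPreState.nat_smul (hs : IsPreState h) {p : α → ℝ} (hp : ∀ x, p x ∈ Set.Icc (0:ℝ) 1)
    (j : ℕ) (hj : ∀ x, (j:ℝ) * p x ≤ 1) :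
    h (fun x => (j:ℝ) * p x) = (j:ℝ) * h p := by
  induction j with
  | zero =>
      have h0 : h (fun _ => (0:ℝ)) = 0 := by
        have := hs.add (fun _ => 0) (fun _ => 0) (fun _ => by norm_num) (fun _ => by norm_num)
          (fun _ => by norm_num)
        simp only [add_zero] at this
        linarith [this]
      simpa using h0
  | succ n ih =>
      have hn : ∀ x, (n:ℝ) * p x ≤ 1 := fun x => by
        have := hj x; have := (hp x).1; push_cast at *; nlinarith
      have hmem : ∀ x, (n:ℝ) * p x ∈ Set.Icc (0:ℝ) 1 := fun x =>
        ⟨mul_nonneg (by positivity) (hp x).1, hn x⟩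
      have := hs.add (fun x => (n:ℝ) * p x) p hmem hp (fun x => by
        have := hj x; push_cast at *; linarith)
      have heq : (fun x => (n:ℝ) * p x + p x) = (fun x => ((n:ℝ)+1) * p x) := by
        funext x; ring
      rw [heq] at this
      rw [ih hn] at this
      push_cast
      rw [this]; ring

end PreState

section PreState2
variable {α : Type*} {h : (α → ℝ) → ℝ}

theorem IsPreState.div_smul (hs : IsPreState h) {p : α → ℝ}
    (hp : ∀ x, p x ∈ Set.Icc (0:ℝ) 1) {a b : ℕ} (hab : a ≤ b) (hb : 0 < b) :
    h (fun x => ((a:ℝ)/b) * p x) = ((a:ℝ)/b) * h p := by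
  have hb' : (0:ℝ) < b := by exact_mod_cast hb
  set q : α → ℝ := fun x => p x / b with hq
  have hqm : ∀ x, q x ∈ Set.Icc (0:ℝ) 1 := fun x => by
    constructor
    · exact div_nonneg (hp x).1 hb'.le
    · rw [div_le_one hb']
      have h1b : (1:ℝ) ≤ b := by exact_mod_cast hb
      linarith [(hp x).2]
  have hbq : ∀ x, (b:ℝ) * q x ≤ 1 := fun x => by
    simp only [hq]; rw [mul_div_cancel₀ _ hb'.ne']; exact (hp x).2
  have haq : ∀ x, (a:ℝ) * q x ≤ 1 := fun x => by
    have h1 : (a:ℝ) ≤ b := by exact_mod_cast hab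
    have := (hqm x).1; have := hbq x; nlinarith
  have h1 := hs.nat_smul hqm b hbq
  have h2 := hs.nat_smul hqm a haq
  have hbqp : (fun x => (b:ℝ) * q x) = p := by
    funext x; simp only [hq]; rw [mul_div_cancel₀ _ hb'.ne']
  rw [hbqp] at h1
  have heq : (fun x => ((a:ℝ)/b) * p x) = (fun x => (a:ℝ) * q x) := by
    funext x; simp only [hq]; ring
  rw [heq, h2, h1]; field_simp

theorem IsPreState.smul (hs : IsPreState h) : ∀ (r : ℝ) (p : α → ℝ),
    r ∈ Set.Icc (0:ℝ) 1 → (∀ x, p x ∈ Set.Icc (0:ℝ) 1) →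
    h (fun x => r * p x) = r * h p := by
  intro r p hr hp
  rcases eq_or_lt_of_le hr.2 with h1 | h1
  · subst h1; simp
  have hmem := hs.mem p hp
  have key : ∀ b : ℕ, 0 < b → |h (fun x => r * p x) - r * h p| ≤ 1 / b := by
    intro b hb
    have hb' : (0:ℝ) < b := by exact_mod_cast hb
    set a : ℕ := ⌊(b:ℝ) * r⌋₊ with ha
    have har : (a:ℝ) ≤ b * r := Nat.floor_le (mul_nonneg hb'.le hr.1)
    have har2 : (b:ℝ) * r < a + 1 := Nat.lt_floor_add_one _
    have hab : a + 1 ≤ b := by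
      have : (a:ℝ) < b := by nlinarith
      have : a < b := by exact_mod_cast this
      omega
    have hlow : (a:ℝ)/b ≤ r := by rw [div_le_iff₀ hb']; linarith
    have hhigh : r ≤ ((a:ℝ)+1)/b := by rw [le_div_iff₀ hb']; push_cast; linarith
    have hub : ((a:ℝ)+1)/b ≤ 1 := by
      rw [div_le_one hb']; exact_mod_cast hab
    have hmemr : ∀ x, r * p x ∈ Set.Icc (0:ℝ) 1 := fun x =>
      ⟨mul_nonneg hr.1 (hp x).1, by nlinarith [(hp x).1, (hp x).2, hr.1]⟩
    have hmem1 : ∀ x, ((a:ℝ)/b) * p x ∈ Set.Icc (0:ℝ) 1 := fun x =>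
      ⟨mul_nonneg (by positivity) (hp x).1, by nlinarith [(hp x).1, (hp x).2, hlow, hr.1]⟩
    have hmem2 : ∀ x, (((a:ℝ)+1)/b) * p x ∈ Set.Icc (0:ℝ) 1 := fun x =>
      ⟨mul_nonneg (div_nonneg (by positivity) hb'.le) (hp x).1, by nlinarith [(hp x).1, (hp x).2, hub]⟩
    have e1 := hs.div_smul hp (a := a) (b := b) (by omega) hb
    have e2 := hs.div_smul hp (a := a+1) (b := b) hab hb
    push_cast at e2
    have m1 : h (fun x => ((a:ℝ)/b) * p x) ≤ h (fun x => r * p x) :=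
      hs.mono hmem1 hmemr (fun x => by nlinarith [(hp x).1])
    have m2 : h (fun x => r * p x) ≤ h (fun x => (((a:ℝ)+1)/b) * p x) :=
      hs.mono hmemr hmem2 (fun x => by nlinarith [(hp x).1])
    rw [e1] at m1; rw [e2] at m2
    have hsplit : ((a:ℝ)+1)/b = (a:ℝ)/b + 1/b := by ring
    have hbp : 1/(b:ℝ) * h p ≤ 1/b * 1 := by
      have : (0:ℝ) ≤ 1/b := by positivity
      nlinarith [hmem.2]
    have hbp0 : 0 ≤ 1/(b:ℝ) * h p := mul_nonneg (by positivity) hmem.1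
    rw [abs_le]
    constructor
    · have h3 : r * h p ≤ ((a:ℝ)/b) * h p + 1/b * h p := by
        have h4 : r ≤ (a:ℝ)/b + 1/b := by rw [← hsplit]; exact hhigh
        nlinarith [hmem.1]
      linarith
    · have h3 : (((a:ℝ)+1)/b) * h p ≤ r * h p + 1/b * h p := by
        have h4 : ((a:ℝ)+1)/b ≤ r + 1/b := by rw [hsplit]; linarith
        nlinarith [hmem.1]
      linarith
  by_contra hne
  have hpos : 0 < |h (fun x => r * p x) - r * h p| := by
    rcases abs_pos.mpr (sub_ne_zero.mpr hne) with h'; exact h'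
  obtain ⟨n, hn⟩ := exists_nat_one_div_lt hpos
  have := key (n+1) (by omega)
  push_cast at this hn
  linarith

theorem IsPreState.isState (hs : IsPreState h) : IsState h :=
  ⟨hs.map_one, hs.mem, hs.add, hs.smul⟩

end PreState2
namespace FAM
variable {X : Type*} {m : Set X → ℝ} (hm : IsFinAddMeasure m)

theorem m_empty (hm : IsFinAddMeasure m) : m (∅ : Set X) = 0 := by
  have := hm.2.2 ∅ ∅ (by simp)
  simp at this; linarith

theorem m_mono (hm : IsFinAddMeasure m) {U V : Set X} (h : U ⊆ V) : m U ≤ m V := by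
  have := hm.2.2 U (V \ U) disjoint_sdiff_self_right
  rw [Set.union_diff_cancel h] at this
  linarith [(hm.2.1 (V \ U)).1]

/-- `T N f = ∑_{k<N} m {f ≥ k+1}`, a finitely-additive integral of `f : X → ℕ`. -/
noncomputable def T (m : Set X → ℝ) (N : ℕ) (f : X → ℕ) : ℝ :=
  ∑ k ∈ Finset.range N, m {x | k + 1 ≤ f x}

theorem T_nonneg (hm : IsFinAddMeasure m) (N : ℕ) (f : X → ℕ) : 0 ≤ T m N f :=
  Finset.sum_nonneg fun k _ => (hm.2.1 _).1

theorem T_le (hm : IsFinAddMeasure m) (N : ℕ) (f : X → ℕ) : T m N f ≤ N := by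
  calc T m N f ≤ ∑ _k ∈ Finset.range N, (1:ℝ) :=
        Finset.sum_le_sum fun k _ => (hm.2.1 _).2
    _ = N := by simp

theorem T_mono (hm : IsFinAddMeasure m) (N : ℕ) {f g : X → ℕ} (h : ∀ x, f x ≤ g x) :
    T m N f ≤ T m N g :=
  Finset.sum_le_sum fun k _ => m_mono hm (fun x hx => le_trans hx (h x))

theorem T_stable (hm : IsFinAddMeasure m) {N N' : ℕ} (h : N ≤ N') {f : X → ℕ}
    (hf : ∀ x, f x ≤ N) : T m N' f = T m N f := by
  unfold T
  rw [← Finset.sum_range_add_sum_Ico _ h]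
  have : ∑ k ∈ Finset.Ico N N', m {x | k + 1 ≤ f x} = 0 := by
    apply Finset.sum_eq_zero
    intro k hk
    have hk' := Finset.mem_Ico.mp hk
    have he : {x | k + 1 ≤ f x} = (∅ : Set X) := by
      ext x; simp only [Set.mem_setOf_eq, Set.mem_empty_iff_false, iff_false, not_le]
      have := hf x; omega
    rw [he, m_empty hm]
  rw [this, add_zero]

theorem T_N_le (hm : IsFinAddMeasure m) {N N' : ℕ} (h : N ≤ N') (f : X → ℕ) :
    T m N f ≤ T m N' f := by
  unfold T
  rw [← Finset.sum_range_add_sum_Ico _ h]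
  have : 0 ≤ ∑ k ∈ Finset.Ico N N', m {x | k + 1 ≤ f x} :=
    Finset.sum_nonneg fun k _ => (hm.2.1 _).1
  linarith

/-- partition identity: `m A = ∑_{k ≤ N} m (A ∩ {f = k})` when `f ≤ N`. -/
theorem m_partition (hm : IsFinAddMeasure m) (A : Set X) (f : X → ℕ) (N : ℕ)
    (hf : ∀ x, f x ≤ N) :
    m A = ∑ k ∈ Finset.range (N+1), m (A ∩ {x | f x = k}) := by
  have key : ∀ n : ℕ, m (A ∩ {x | f x ≤ n}) = ∑ k ∈ Finset.range (n+1), m (A ∩ {x | f x = k}) := by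
    intro n
    induction n with
    | zero => simp [Nat.le_zero]
    | succ n ih =>
        have hsplit : A ∩ {x | f x ≤ n+1} = (A ∩ {x | f x ≤ n}) ∪ (A ∩ {x | f x = n+1}) := by
          ext x; simp only [Set.mem_inter_iff, Set.mem_union, Set.mem_setOf_eq]
          constructor
          · rintro ⟨ha, hle⟩
            rcases Nat.lt_or_ge (f x) (n+1) with h' | h'
            · exact Or.inl ⟨ha, by omega⟩
            · exact Or.inr ⟨ha, by omega⟩
          · rintro (⟨ha, hle⟩ | ⟨ha, heq⟩) <;> exact ⟨‹_›, by omega⟩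
        have hdisj : Disjoint (A ∩ {x | f x ≤ n}) (A ∩ {x | f x = n+1}) := by
          rw [Set.disjoint_iff]
          rintro x ⟨⟨_, h1⟩, ⟨_, h2⟩⟩
          simp only [Set.mem_setOf_eq] at h1 h2; omega
        rw [hsplit, hm.2.2 _ _ hdisj, ih, Finset.sum_range_succ, Finset.sum_range_succ,
          Finset.sum_range_succ]
  have hA : A ∩ {x | f x ≤ N} = A := by
    ext x; simp only [Set.mem_inter_iff, Set.mem_setOf_eq, and_iff_left_iff_imp]
    exact fun _ => hf x
  rw [← key N, hA]

theorem T_add_indicator (hm : IsFinAddMeasure m) (N : ℕ) (f : X → ℕ)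
    (hf : ∀ x, f x ≤ N) (A : Set X) [DecidablePred (· ∈ A)] :
    T m (N+1) (fun x => f x + (if x ∈ A then 1 else 0)) = T m N f + m A := by
  have hset : ∀ k : ℕ, {x | k + 1 ≤ f x + (if x ∈ A then 1 else 0)}
      = {x | k + 1 ≤ f x} ∪ (A ∩ {x | f x = k}) := by
    intro k; ext x
    by_cases hx : x ∈ A <;>
      simp only [Set.mem_setOf_eq, Set.mem_union, Set.mem_inter_iff, if_pos, if_neg, hx,
        if_true, if_false, true_and, false_and, or_false] <;> omega
  have hdisj : ∀ k : ℕ, Disjoint {x | k + 1 ≤ f x} (A ∩ {x | f x = k}) := by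
    intro k; rw [Set.disjoint_iff]
    rintro x ⟨h1, _, h2⟩
    simp only [Set.mem_setOf_eq] at h1 h2; omega
  unfold T
  calc ∑ k ∈ Finset.range (N+1), m {x | k + 1 ≤ f x + (if x ∈ A then 1 else 0)}
      = ∑ k ∈ Finset.range (N+1), (m {x | k + 1 ≤ f x} + m (A ∩ {x | f x = k})) := by
        apply Finset.sum_congr rfl; intro k _
        rw [hset k, hm.2.2 _ _ (hdisj k)]
    _ = ∑ k ∈ Finset.range (N+1), m {x | k + 1 ≤ f x}
        + ∑ k ∈ Finset.range (N+1), m (A ∩ {x | f x = k}) := Finset.sum_add_distrib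
    _ = T m N f + m A := by
        rw [← m_partition hm A f N hf]
        have := T_stable hm (Nat.le_succ N) hf
        unfold T at this; rw [this]; rfl

theorem T_add (hm : IsFinAddMeasure m) (N : ℕ) (f : X → ℕ) (hf : ∀ x, f x ≤ N) :
    ∀ (M : ℕ) (g : X → ℕ), (∀ x, g x ≤ M) →
    T m (N+M) (fun x => f x + g x) = T m N f + T m M g := by
  intro M
  induction M with
  | zero =>
      intro g hg
      have he : (fun x => f x + g x) = f := funext fun x => by have := hg x; omega
      rw [he]
      simp [T]
  | succ M ih =>
      intro g hg
      set A : Set X := {x | 1 ≤ g x} with hA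
      set g' : X → ℕ := fun x => g x - 1 with hg'def
      have hg' : ∀ x, g' x ≤ M := fun x => by
        have := hg x; simp only [hg'def]; omega
      have e1 : (fun x => f x + g x)
          = (fun x => (f x + g' x) + (if x ∈ A then 1 else 0)) := by
        funext x
        by_cases hx : x ∈ A
        · have h1 : 1 ≤ g x := hx
          simp only [hg'def, if_pos hx]; omega
        · have h1 : ¬ 1 ≤ g x := hx
          simp only [hg'def, if_neg hx]; omega
      have e2 : g = (fun x => g' x + (if x ∈ A then 1 else 0)) := by
        funext x
        by_cases hx : x ∈ A
        · have h1 : 1 ≤ g x := hx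
          simp only [hg'def, if_pos hx]; omega
        · have h1 : ¬ 1 ≤ g x := hx
          simp only [hg'def, if_neg hx]; omega
      have hfg' : ∀ x, f x + g' x ≤ N + M := fun x => by
        have := hf x; have := hg' x; omega
      have step1 : T m (N+(M+1)) (fun x => f x + g x)
          = T m (N+M) (fun x => f x + g' x) + m A := by
        rw [e1]
        exact T_add_indicator hm (N+M) _ hfg' A
      have step2 : T m (M+1) g = T m M g' + m A := by
        conv_lhs => rw [e2]
        exact T_add_indicator hm M g' hg' A
      rw [step1, ih g' hg', step2]; ring

/-- dyadic floor approximation -/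
noncomputable def fl (n : ℕ) (p : X → ℝ) : X → ℕ := fun x => ⌊(2:ℝ)^n * p x⌋₊

/-- Riemann sum at level `n` -/
noncomputable def S (m : Set X → ℝ) (n : ℕ) (p : X → ℝ) : ℝ :=
  ((2:ℝ)^n)⁻¹ * T m (2^n) (fl n p)

/-- the integral: supremum of the Riemann sums -/
noncomputable def hh (m : Set X → ℝ) (p : X → ℝ) : ℝ := ⨆ n, S m n p

variable {p q : X → ℝ}

theorem fl_le (n : ℕ) (hp : ∀ x, p x ∈ Set.Icc (0:ℝ) 1) (x : X) : fl n p x ≤ 2^n := by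
  unfold fl
  have : (2:ℝ)^n * p x ≤ ((2^n : ℕ):ℝ) := by
    push_cast; nlinarith [(hp x).1, (hp x).2, pow_pos (by norm_num : (0:ℝ) < 2) n]
  calc ⌊(2:ℝ)^n * p x⌋₊ ≤ ⌊((2^n : ℕ):ℝ)⌋₊ := Nat.floor_le_floor this
    _ = 2^n := Nat.floor_natCast _

theorem S_mem (hm : IsFinAddMeasure m) (n : ℕ) (hp : ∀ x, p x ∈ Set.Icc (0:ℝ) 1) :
    S m n p ∈ Set.Icc (0:ℝ) 1 := by
  constructor
  · exact mul_nonneg (by positivity) (T_nonneg hm _ _)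
  · rw [S, inv_mul_le_iff₀ (by positivity), mul_one]
    have := T_le hm (2^n) (fl n p)
    calc T m (2^n) (fl n p) ≤ ((2^n : ℕ):ℝ) := this
      _ = (2:ℝ)^n := by push_cast; ring

theorem S_mono_n (hm : IsFinAddMeasure m) (n : ℕ) (hp : ∀ x, p x ∈ Set.Icc (0:ℝ) 1) :
    S m n p ≤ S m (n+1) p := by
  have hfl : ∀ x, fl n p x ≤ 2^n := fl_le n hp
  have hdbl : ∀ x, fl n p x + fl n p x ≤ fl (n+1) p x := by
    intro x
    unfold fl
    rw [← two_mul]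
    apply Nat.le_floor
    push_cast
    have h0 : (0:ℝ) ≤ (2:ℝ)^n * p x := by
      have := (hp x).1; positivity
    have := Nat.floor_le h0
    calc (2:ℝ) * (⌊(2:ℝ)^n * p x⌋₊ : ℝ) ≤ 2 * ((2:ℝ)^n * p x) := by linarith
      _ = (2:ℝ)^(n+1) * p x := by ring
  have h1 : T m (2^n) (fl n p) + T m (2^n) (fl n p)
      = T m (2^n + 2^n) (fun x => fl n p x + fl n p x) :=
    (T_add hm (2^n) (fl n p) hfl (2^n) (fl n p) hfl).symm
  have h2 : T m (2^n + 2^n) (fun x => fl n p x + fl n p x) ≤ T m (2^(n+1)) (fl (n+1) p) := by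
    have : 2^n + 2^n = 2^(n+1) := by ring
    rw [this]
    exact T_mono hm _ hdbl
  unfold S
  have hle : 2 * T m (2 ^ n) (fl n p) ≤ T m (2 ^ (n + 1)) (fl (n + 1) p) := by
    rw [two_mul]; rw [h1]; exact h2
  have hpow : (0:ℝ) < (2:ℝ)^(n+1) := by positivity
  rw [pow_succ]
  rw [mul_inv]
  have h2n : (0:ℝ) < (2:ℝ)^n := by positivity
  have := mul_le_mul_of_nonneg_left hle (le_of_lt (by positivity : (0:ℝ) < ((2:ℝ)^n)⁻¹ * 2⁻¹))
  calc ((2:ℝ)^n)⁻¹ * T m (2 ^ n) (fl n p)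
      = ((2:ℝ)^n)⁻¹ * 2⁻¹ * (2 * T m (2 ^ n) (fl n p)) := by field_simp
    _ ≤ ((2:ℝ)^n)⁻¹ * 2⁻¹ * T m (2 ^ (n + 1)) (fl (n + 1) p) := this
    _ = ((2:ℝ)^n)⁻¹ * (2:ℝ)⁻¹ * T m (2 ^ (n + 1)) (fl (n + 1) p) := by ring

theorem S_bdd (hm : IsFinAddMeasure m) (hp : ∀ x, p x ∈ Set.Icc (0:ℝ) 1) :
    BddAbove (Set.range fun n => S m n p) := by
  refine ⟨1, ?_⟩
  rintro y ⟨n, rfl⟩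
  exact (S_mem hm n hp).2

theorem hh_tendsto (hm : IsFinAddMeasure m) (hp : ∀ x, p x ∈ Set.Icc (0:ℝ) 1) :
    Filter.Tendsto (fun n => S m n p) Filter.atTop (nhds (hh m p)) :=
  tendsto_atTop_ciSup (monotone_nat_of_le_succ fun n => S_mono_n hm n hp) (S_bdd hm hp)

theorem hh_mem (hm : IsFinAddMeasure m) (hp : ∀ x, p x ∈ Set.Icc (0:ℝ) 1) :
    hh m p ∈ Set.Icc (0:ℝ) 1 := by
  constructor
  · exact le_ciSup_of_le (S_bdd hm hp) 0 (S_mem hm 0 hp).1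
  · exact ciSup_le fun n => (S_mem hm n hp).2

theorem S_one (hm : IsFinAddMeasure m) (n : ℕ) : S m n (fun _ => (1:ℝ)) = 1 := by
  have hfl : fl n (fun _ : X => (1:ℝ)) = fun _ => 2^n := by
    funext x
    unfold fl
    rw [mul_one]
    rw [show (2:ℝ)^n = ((2^n : ℕ):ℝ) by push_cast; ring, Nat.floor_natCast]
  rw [S, hfl]
  have : T m (2^n) (fun _ => 2^n) = ∑ _k ∈ Finset.range (2^n), m Set.univ := by
    unfold T
    apply Finset.sum_congr rfl
    intro k hk
    have hk' := Finset.mem_range.mp hk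
    congr 1
    ext x; simp only [Set.mem_setOf_eq, Set.mem_univ, iff_true]; omega
  rw [this, hm.1]
  simp only [Finset.sum_const, Finset.card_range, nsmul_eq_mul, mul_one]
  rw [show ((2^n : ℕ):ℝ) = (2:ℝ)^n by push_cast; ring]
  field_simp

theorem hh_one (hm : IsFinAddMeasure m) : hh m (fun _ => (1:ℝ)) = 1 := by
  unfold hh
  rw [show (fun n => S m n (fun _ => (1:ℝ))) = fun _ => (1:ℝ) from funext (S_one hm)]
  exact ciSup_const

theorem S_indicator (hm : IsFinAddMeasure m) (n : ℕ) (U : Set X) :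
    S m n (Set.indicator U (fun _ => 1)) = m U := by
  classical
  have hfl : fl n (Set.indicator U (fun _ => 1)) = fun x => if x ∈ U then 2^n else 0 := by
    funext x
    unfold fl
    by_cases hx : x ∈ U
    · rw [Set.indicator_of_mem hx, if_pos hx, mul_one]
      rw [show (2:ℝ)^n = ((2^n : ℕ):ℝ) by push_cast; ring, Nat.floor_natCast]
    · rw [Set.indicator_of_notMem hx, if_neg hx, mul_zero, Nat.floor_zero]
  rw [S, hfl]
  have : T m (2^n) (fun x => if x ∈ U then 2^n else 0) = ∑ _k ∈ Finset.range (2^n), m U := by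
    unfold T
    apply Finset.sum_congr rfl
    intro k hk
    have hk' := Finset.mem_range.mp hk
    congr 1
    ext x
    by_cases hx : x ∈ U
    · simp only [Set.mem_setOf_eq, hx, if_true, iff_true]
      omega
    · simp only [Set.mem_setOf_eq, hx, if_false, iff_false]
      omega
  rw [this]
  simp only [Finset.sum_const, Finset.card_range, nsmul_eq_mul]
  rw [show ((2^n : ℕ):ℝ) = (2:ℝ)^n by push_cast; ring]
  have : (0:ℝ) < (2:ℝ)^n := by positivity
  field_simp

theorem hh_indicator (hm : IsFinAddMeasure m) (U : Set X) :
    hh m (Set.indicator U (fun _ => 1)) = m U := by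
  unfold hh
  rw [show (fun n => S m n (Set.indicator U (fun _ => 1))) = fun _ => m U from
    funext fun n => S_indicator hm n U]
  exact ciSup_const

theorem hpq_mem (hp : ∀ x, p x ∈ Set.Icc (0:ℝ) 1) (hq : ∀ x, q x ∈ Set.Icc (0:ℝ) 1)
    (hpq : ∀ x, p x + q x ≤ 1) : ∀ x, p x + q x ∈ Set.Icc (0:ℝ) 1 := fun x =>
  ⟨add_nonneg (hp x).1 (hq x).1, hpq x⟩

theorem fl_superadd (n : ℕ) (hp : ∀ x, p x ∈ Set.Icc (0:ℝ) 1)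
    (hq : ∀ x, q x ∈ Set.Icc (0:ℝ) 1) (x : X) :
    fl n p x + fl n q x ≤ fl n (fun x => p x + q x) x := by
  unfold fl
  apply Nat.le_floor
  push_cast
  have h1 := Nat.floor_le (show (0:ℝ) ≤ (2:ℝ)^n * p x by
    have := (hp x).1; positivity)
  have h2 := Nat.floor_le (show (0:ℝ) ≤ (2:ℝ)^n * q x by
    have := (hq x).1; positivity)
  nlinarith

theorem fl_subadd (n : ℕ) (hp : ∀ x, p x ∈ Set.Icc (0:ℝ) 1)
    (hq : ∀ x, q x ∈ Set.Icc (0:ℝ) 1) (x : X) :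
    fl n (fun x => p x + q x) x ≤ fl n p x + fl n q x + 1 := by
  show ⌊(2:ℝ)^n * (p x + q x)⌋₊ ≤ ⌊(2:ℝ)^n * p x⌋₊ + ⌊(2:ℝ)^n * q x⌋₊ + 1
  have h0 : (0:ℝ) ≤ (2:ℝ)^n * (p x + q x) := by
    have := (hp x).1; have := (hq x).1; positivity
  have h1 := Nat.lt_floor_add_one ((2:ℝ)^n * p x)
  have h2 := Nat.lt_floor_add_one ((2:ℝ)^n * q x)
  have hlt : (2:ℝ)^n * (p x + q x) < ((⌊(2:ℝ)^n * p x⌋₊ + ⌊(2:ℝ)^n * q x⌋₊ + 2 : ℕ) : ℝ) := by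
    push_cast; nlinarith
  have := (Nat.floor_lt h0).mpr hlt
  omega

theorem S_lower (hm : IsFinAddMeasure m) (hp : ∀ x, p x ∈ Set.Icc (0:ℝ) 1)
    (hq : ∀ x, q x ∈ Set.Icc (0:ℝ) 1) (hpq : ∀ x, p x + q x ≤ 1) (n : ℕ) :
    S m n p + S m n q ≤ S m n (fun x => p x + q x) := by
  have hflp : ∀ x, fl n p x ≤ 2^n := fl_le n hp
  have hflq : ∀ x, fl n q x ≤ 2^n := fl_le n hq
  have hflpq : ∀ x, fl n (fun x => p x + q x) x ≤ 2^n := fl_le n (hpq_mem hp hq hpq)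
  have h1 : T m (2^n) (fl n p) + T m (2^n) (fl n q)
      = T m (2^n + 2^n) (fun x => fl n p x + fl n q x) :=
    (T_add hm (2^n) (fl n p) hflp (2^n) (fl n q) hflq).symm
  have h2 : T m (2^n + 2^n) (fun x => fl n p x + fl n q x)
      ≤ T m (2^n + 2^n) (fl n (fun x => p x + q x)) :=
    T_mono hm _ (fl_superadd n hp hq)
  have h3 : T m (2^n + 2^n) (fl n (fun x => p x + q x))
      = T m (2^n) (fl n (fun x => p x + q x)) :=
    T_stable hm (Nat.le_add_right _ _) hflpq
  unfold S
  have hpow : (0:ℝ) < ((2:ℝ)^n)⁻¹ := by positivity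
  nlinarith [h1, h2, h3]

theorem S_upper (hm : IsFinAddMeasure m) (hp : ∀ x, p x ∈ Set.Icc (0:ℝ) 1)
    (hq : ∀ x, q x ∈ Set.Icc (0:ℝ) 1) (hpq : ∀ x, p x + q x ≤ 1) (n : ℕ) :
    S m n (fun x => p x + q x) ≤ S m n p + S m n q + ((2:ℝ)^n)⁻¹ := by
  have hflp : ∀ x, fl n p x ≤ 2^n := fl_le n hp
  have hflq : ∀ x, fl n q x ≤ 2^n := fl_le n hq
  have hsum : ∀ x, fl n p x + fl n q x ≤ 2^n + 2^n := fun x =>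
    Nat.add_le_add (hflp x) (hflq x)
  have h1 : T m (2^n) (fl n (fun x => p x + q x))
      ≤ T m (2^n + 2^n + 1) (fl n (fun x => p x + q x)) :=
    T_N_le hm ((Nat.le_add_right _ _).trans (Nat.le_succ _)) _
  have h2 : T m (2^n + 2^n + 1) (fl n (fun x => p x + q x))
      ≤ T m (2^n + 2^n + 1) (fun x => (fl n p x + fl n q x) + 1) :=
    T_mono hm _ (fun x => fl_subadd n hp hq x)
  have h3 : T m (2^n + 2^n + 1) (fun x => (fl n p x + fl n q x) + 1)
      = T m (2^n + 2^n) (fun x => fl n p x + fl n q x) + T m 1 (fun _ => 1) :=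
    T_add hm (2^n + 2^n) _ hsum 1 (fun _ => 1) (fun _ => le_refl 1)
  have h4 : T m 1 (fun _ : X => 1) = 1 := by
    unfold T
    rw [Finset.sum_range_one]
    rw [show {x : X | 0 + 1 ≤ 1} = Set.univ by ext x; simp]
    exact hm.1
  have h5 : T m (2^n + 2^n) (fun x => fl n p x + fl n q x)
      = T m (2^n) (fl n p) + T m (2^n) (fl n q) :=
    T_add hm (2^n) (fl n p) hflp (2^n) (fl n q) hflq
  unfold S
  have hpow : (0:ℝ) < ((2:ℝ)^n)⁻¹ := by positivity
  have hfin : T m (2^n) (fl n (fun x => p x + q x))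
      ≤ T m (2^n) (fl n p) + T m (2^n) (fl n q) + 1 := by
    rw [h4] at h3; rw [h5] at h3; linarith
  nlinarith [hfin]

theorem hh_add (hm : IsFinAddMeasure m) (hp : ∀ x, p x ∈ Set.Icc (0:ℝ) 1)
    (hq : ∀ x, q x ∈ Set.Icc (0:ℝ) 1) (hpq : ∀ x, p x + q x ≤ 1) :
    hh m (fun x => p x + q x) = hh m p + hh m q := by
  have t1 := hh_tendsto hm hp
  have t2 := hh_tendsto hm hq
  have t3 := hh_tendsto hm (hpq_mem hp hq hpq)
  have tsum : Filter.Tendsto (fun n => S m n p + S m n q) Filter.atTop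
      (nhds (hh m p + hh m q)) := t1.add t2
  have tinv : Filter.Tendsto (fun n : ℕ => ((2:ℝ)^n)⁻¹) Filter.atTop (nhds 0) := by
    simp only [← inv_pow]
    exact tendsto_pow_atTop_nhds_zero_of_lt_one (by norm_num) (by norm_num)
  have tsum2 : Filter.Tendsto (fun n => S m n p + S m n q + ((2:ℝ)^n)⁻¹) Filter.atTop
      (nhds (hh m p + hh m q)) := by
    have := tsum.add tinv
    simpa using this
  apply le_antisymm
  · exact le_of_tendsto_of_tendsto' t3 tsum2 (fun n => S_upper hm hp hq hpq n)
  · exact le_of_tendsto_of_tendsto' tsum t3 (fun n => S_lower hm hp hq hpq n)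



end FAM




section StateSide
variable {X : Type*} {h : (X → ℝ) → ℝ} {p : X → ℝ}

theorem IsState.toPre (hs : IsState h) : IsPreState h := ⟨hs.map_one, hs.mem, hs.add⟩

theorem IsPreState.zero (hs : IsPreState h) : h (fun _ => (0:ℝ)) = 0 := by
  have := hs.add (fun _ => 0) (fun _ => 0) (fun _ => by norm_num) (fun _ => by norm_num)
    (fun _ => by norm_num)
  simp only [add_zero] at this
  linarith [this]

theorem IsPreState.const (hs : IsPreState h) {c : ℝ} (hc : c ∈ Set.Icc (0:ℝ) 1) :
    h (fun _ => c) = c := by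
  have := hs.smul c (fun _ => 1) hc (fun _ => by norm_num)
  simp only [mul_one] at this
  rw [this, hs.map_one, mul_one]

/-- value of a state on a dyadic simple approximation, in terms of indicators -/
theorem state_floor_sum (hs : IsState h) (n : ℕ) (hp : ∀ x, p x ∈ Set.Icc (0:ℝ) 1) :
    ∀ j : ℕ, h (fun x => ((min (FAM.fl n p x) j : ℕ) : ℝ) * ((2:ℝ)^n)⁻¹)
      = ∑ k ∈ Finset.range j,
          ((2:ℝ)^n)⁻¹ * h (Set.indicator {x | k+1 ≤ FAM.fl n p x} (fun _ => 1)) := by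
  have hpre := hs.toPre
  set c : ℝ := ((2:ℝ)^n)⁻¹ with hc
  have hcpos : 0 < c := by rw [hc]; positivity
  have hcmem : c ∈ Set.Icc (0:ℝ) 1 := by
    constructor
    · exact hcpos.le
    · rw [hc]; rw [inv_le_one_iff₀]; right; exact one_le_pow₀ (by norm_num)
  have hflle : ∀ x, FAM.fl n p x ≤ 2^n := FAM.fl_le n hp
  have hmulle : ∀ (k : ℕ) (x : X), k ≤ 2^n → ((k : ℕ):ℝ) * c ∈ Set.Icc (0:ℝ) 1 := by
    intro k x hk
    constructor
    · positivity
    · rw [hc]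
      rw [mul_inv_le_iff₀ (by positivity), one_mul]
      exact_mod_cast hk
  intro j
  induction j with
  | zero =>
      simp only [Nat.min_zero, Nat.cast_zero, zero_mul, Finset.range_zero, Finset.sum_empty]
      exact hpre.zero
  | succ j ih =>
      classical
      set A : Set X := {x | j+1 ≤ FAM.fl n p x} with hA
      set indA : X → ℝ := Set.indicator A (fun _ => 1) with hindA
      have hindmem : ∀ x, indA x ∈ Set.Icc (0:ℝ) 1 := fun x => by
        by_cases hx : x ∈ A
        · rw [hindA, Set.indicator_of_mem hx]; norm_num
        · rw [hindA, Set.indicator_of_notMem hx]; norm_num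
      have hp1mem : ∀ x, ((min (FAM.fl n p x) j : ℕ):ℝ) * c ∈ Set.Icc (0:ℝ) 1 := fun x =>
        hmulle _ x (le_trans (min_le_left _ _) (hflle x))
      have hq1mem : ∀ x, c * indA x ∈ Set.Icc (0:ℝ) 1 := fun x => by
        constructor
        · exact mul_nonneg hcpos.le (hindmem x).1
        · nlinarith [hcmem.2, (hindmem x).2, (hindmem x).1, hcpos.le]
      have hsumle : ∀ x, ((min (FAM.fl n p x) j : ℕ):ℝ) * c + c * indA x ≤ 1 := by
        intro x
        by_cases hx : x ∈ A
        · have hxA : j+1 ≤ FAM.fl n p x := hx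
          rw [hindA, Set.indicator_of_mem hx]
          have : ((min (FAM.fl n p x) j : ℕ):ℝ) = (j:ℝ) := by
            rw [min_eq_right (by omega)]
          rw [this, mul_one]
          have h2 := hmulle (j+1) x (le_trans hxA (hflle x))
          calc (j:ℝ) * c + c = ((j+1:ℕ):ℝ) * c := by push_cast; ring
            _ ≤ 1 := (h2).2
        · rw [hindA, Set.indicator_of_notMem hx, mul_zero, add_zero]
          exact (hp1mem x).2
      have hadd := hs.add _ _ hp1mem hq1mem hsumle
      have heq : (fun x => ((min (FAM.fl n p x) j : ℕ):ℝ) * c + c * indA x)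
          = (fun x => ((min (FAM.fl n p x) (j+1) : ℕ):ℝ) * c) := by
        funext x
        by_cases hx : x ∈ A
        · have hxA : j+1 ≤ FAM.fl n p x := hx
          rw [hindA, Set.indicator_of_mem hx]
          rw [min_eq_right (by omega : j ≤ FAM.fl n p x), min_eq_right (by omega)]
          push_cast; ring
        · have hxA : ¬ (j+1 ≤ FAM.fl n p x) := hx
          rw [hindA, Set.indicator_of_notMem hx, mul_zero, add_zero]
          rw [min_eq_left (by omega : FAM.fl n p x ≤ j), min_eq_left (by omega)]
      rw [heq] at hadd
      rw [hadd, ih, Finset.sum_range_succ]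
      congr 1
      exact hs.smul c indA hcmem hindmem

/-- two states that agree on indicators agree on `[0,1]`-valued predicates -/
theorem states_agree {h h' : (X → ℝ) → ℝ} (hs : IsState h) (hs' : IsState h')
    (hagree : ∀ U : Set X, h (Set.indicator U (fun _ => 1))
      = h' (Set.indicator U (fun _ => 1)))
    (hp : ∀ x, p x ∈ Set.Icc (0:ℝ) 1) : h p = h' p := by
  have key : ∀ n : ℕ, |h p - h' p| ≤ 2 * ((2:ℝ)^n)⁻¹ := by
    intro n
    set c : ℝ := ((2:ℝ)^n)⁻¹ with hc
    have hcpos : 0 < c := by rw [hc]; positivity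
    have hcmem : c ∈ Set.Icc (0:ℝ) 1 := by
      constructor
      · exact hcpos.le
      · rw [hc, inv_le_one_iff₀]; right; exact one_le_pow₀ (by norm_num)
    set sn : X → ℝ := fun x => ((FAM.fl n p x : ℕ):ℝ) * c with hsn
    have hflle : ∀ x, FAM.fl n p x ≤ 2^n := FAM.fl_le n hp
    have hsnle : ∀ x, sn x ≤ p x := by
      intro x
      rw [hsn]
      have h1 : ((FAM.fl n p x : ℕ):ℝ) ≤ (2:ℝ)^n * p x :=
        Nat.floor_le (by have := (hp x).1; positivity)
      rw [hc]
      rw [mul_inv_le_iff₀ (by positivity)]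
      linarith [h1]
    have hsnmem : ∀ x, sn x ∈ Set.Icc (0:ℝ) 1 := fun x =>
      ⟨by rw [hsn]; positivity, le_trans (hsnle x) (hp x).2⟩
    have hdiff : ∀ x, p x - sn x < c := by
      intro x
      have hpow : (0:ℝ) < (2:ℝ)^n := by positivity
      have h2 : (2:ℝ)^n * p x < (FAM.fl n p x : ℝ) + 1 := Nat.lt_floor_add_one _
      have h5 := mul_lt_mul_of_pos_right h2 (inv_pos.mpr hpow)
      have h6 : (2:ℝ)^n * p x * ((2:ℝ)^n)⁻¹ = p x := by field_simp
      have h7 : ((FAM.fl n p x : ℝ) + 1) * ((2:ℝ)^n)⁻¹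
          = (FAM.fl n p x : ℝ) * ((2:ℝ)^n)⁻¹ + ((2:ℝ)^n)⁻¹ := by ring
      rw [hsn, hc]; simp only; linarith
    have happrox : ∀ (g : (X → ℝ) → ℝ), IsState g → g p - g sn ∈ Set.Icc (0:ℝ) c := by
      intro g hg
      have hgpre := hg.toPre
      set d : X → ℝ := fun x => p x - sn x with hd
      have hdmem : ∀ x, d x ∈ Set.Icc (0:ℝ) 1 := fun x =>
        ⟨by rw [hd]; simp only; linarith [hsnle x],
         by rw [hd]; simp only; linarith [hdiff x, hcmem.2]⟩
      have hadd := hg.add sn d hsnmem hdmem (fun x => by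
        rw [hd]; simp only; linarith [(hp x).2])
      have heq : (fun x => sn x + d x) = p := by funext x; rw [hd]; ring
      rw [heq] at hadd
      have hdle : g d ≤ c := by
        have hmono := hgpre.mono hdmem (fun _ => hcmem) (fun x => (hdiff x).le)
        rw [hgpre.const hcmem] at hmono
        exact hmono
      have hdge : 0 ≤ g d := (hg.mem d hdmem).1
      constructor <;> [linarith; linarith]
    have hsneq : h sn = h' sn := by
      have e1 := state_floor_sum hs n hp (2^n)
      have e2 := state_floor_sum hs' n hp (2^n)
      have hmin : (fun x => ((min (FAM.fl n p x) (2^n) : ℕ):ℝ) * ((2:ℝ)^n)⁻¹) = sn := by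
        funext x
        rw [min_eq_left (hflle x)]
      rw [hmin] at e1 e2
      rw [e1, e2]
      apply Finset.sum_congr rfl
      intro k _
      rw [hagree]
    have h1 := happrox h hs
    have h2 := happrox h' hs'
    rw [abs_le]
    constructor
    · linarith [h1.1, h1.2, h2.1, h2.2, hsneq, hcpos.le]
    · linarith [h1.1, h1.2, h2.1, h2.2, hsneq, hcpos.le]
  by_contra hne
  have hpos : 0 < |h p - h' p| := abs_pos.mpr (sub_ne_zero.mpr hne)
  obtain ⟨n, hn⟩ := exists_nat_one_div_lt (show 0 < |h p - h' p|/2 by positivity)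
  have hkey := key (n+1)
  have hpow : ((n:ℝ)+1) ≤ (2:ℝ)^(n+1) := by
    have h8 : n+1 < 2^(n+1) := Nat.lt_two_pow_self
    have h9 : ((n+1:ℕ):ℝ) ≤ ((2^(n+1):ℕ):ℝ) := by exact_mod_cast h8.le
    push_cast at h9
    linarith
  have hinv : ((2:ℝ)^(n+1))⁻¹ ≤ 1/((n:ℝ)+1) := by
    rw [one_div]
    exact inv_anti₀ (by positivity) hpow
  linarith

end StateSide

/-- States on `[0,1]^X` correspond bijectively to finitely additive measures on `𝒫(X)`,
via `Φ(h)(U) = h(𝟙_U)`: the map `Φ` is well defined, injective (on predicates),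
and surjective. -/
theorem states_biject_finAddMeasures {X : Type*} :
    (∀ h : (X → ℝ) → ℝ, IsState h →
      IsFinAddMeasure (fun U => h (Set.indicator U (fun _ => 1)))) ∧
    (∀ h h' : (X → ℝ) → ℝ, IsState h → IsState h' →
      (∀ U : Set X, h (Set.indicator U (fun _ => 1)) = h' (Set.indicator U (fun _ => 1))) →
      ∀ p : X → ℝ, (∀ x, p x ∈ Set.Icc (0:ℝ) 1) → h p = h' p) ∧
    (∀ m : Set X → ℝ, IsFinAddMeasure m →
      ∃ h : (X → ℝ) → ℝ, IsState h ∧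
        ∀ U : Set X, h (Set.indicator U (fun _ => 1)) = m U) := by
  have hind : ∀ (U : Set X) (x : X), Set.indicator U (fun _ => (1:ℝ)) x ∈ Set.Icc (0:ℝ) 1 := by
    intro U x
    by_cases hx : x ∈ U
    · rw [Set.indicator_of_mem hx]; norm_num
    · rw [Set.indicator_of_notMem hx]; norm_num
  refine ⟨?_, ?_, ?_⟩
  · intro h hs
    refine ⟨?_, fun U => hs.mem _ (hind U), ?_⟩
    · show h (Set.indicator Set.univ (fun _ => 1)) = 1
      rw [Set.indicator_univ]
      exact hs.map_one
    · intro U V hUV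
      show h (Set.indicator (U ∪ V) (fun _ => 1)) = _
      have e : Set.indicator (U ∪ V) (fun _ => (1:ℝ))
          = fun x => Set.indicator U (fun _ => (1:ℝ)) x + Set.indicator V (fun _ => (1:ℝ)) x := by
        funext x
        by_cases hxU : x ∈ U
        · have hxV : x ∉ V := Set.disjoint_left.mp hUV hxU
          rw [Set.indicator_of_mem (Set.mem_union_left _ hxU), Set.indicator_of_mem hxU,
            Set.indicator_of_notMem hxV, add_zero]
        · by_cases hxV : x ∈ V
          · rw [Set.indicator_of_mem (Set.mem_union_right _ hxV), Set.indicator_of_notMem hxU,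
              Set.indicator_of_mem hxV, zero_add]
          · rw [Set.indicator_of_notMem (by simp [hxU, hxV]), Set.indicator_of_notMem hxU,
              Set.indicator_of_notMem hxV, add_zero]
      rw [e]
      apply hs.add _ _ (hind U) (hind V)
      intro x
      by_cases hxU : x ∈ U
      · have hxV : x ∉ V := Set.disjoint_left.mp hUV hxU
        rw [Set.indicator_of_mem hxU, Set.indicator_of_notMem hxV]; norm_num
      · rw [Set.indicator_of_notMem hxU]
        linarith [(hind V x).2]
  · intro h h' hs hs' hagree p hp
    exact states_agree hs hs' hagree hp
  · intro m hm
    exact ⟨FAM.hh m,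
      IsPreState.isState ⟨FAM.hh_one hm, fun p hp => FAM.hh_mem hm hp,
        fun p q hp hq hpq => FAM.hh_add hm hp hq hpq⟩,
      fun U => FAM.hh_indicator hm U⟩
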